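/- Let ν be a symmetric Lévy measure on ℝⁿ with ν(ℝⁿ∖{0}) > 0 and Ω ⊆ ℝⁿ a nonempty bounded open set. If u ∈ C(ℝⁿ) satisfies u ≥ 0 on ℝⁿ∖Ω, u has a negative global minimum at a point x ∈ Ω, and Lu(y) exists for every y ∈ Ω, then there exists x′ ∈ Ω such that u(x′) = u(x) and Lu(x′) < 0. -/

import Mathlib

open MeasureTheory Filter Set Topology
open scoped ENNReal Topology Pointwise Classical

noncomputable section

abbrev Eucl (n : ℕ) : Type := EuclideanSpace ℝ (Fin n)

/-- A symmetric Lévy measure on ℝⁿ: ν({0}) = 0, ν(−A) = ν(A) for Borel A, and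
∫ min(1,|y|²) dν < ∞. -/
def IsSymmLevy {n : ℕ} (ν : Measure (Eucl n)) : Prop :=
  ν {0} = 0 ∧ (∀ A : Set (Eucl n), MeasurableSet A → ν (-A) = ν A) ∧
    (∫⁻ y, ENNReal.ofReal (min 1 (‖y‖ ^ 2)) ∂ν) < ⊤

/-- The truncated nonlocal operator: ∫_{|y| ≥ ε} (u(x) − u(x+y)) dν(y). -/
def truncL {n : ℕ} (ν : Measure (Eucl n)) (u : Eucl n → ℝ) (x : Eucl n) (ε : ℝ) : ℝ :=
  ∫ y in {y : Eucl n | ε ≤ ‖y‖}, (u x - u (x + y)) ∂ν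

/-- `Lu(x)` is well defined with value `l`: the integrands are ν-integrable away from the
origin, and the principal value limit exists and equals `l`. -/
def HasLAt {n : ℕ} (ν : Measure (Eucl n)) (u : Eucl n → ℝ) (x : Eucl n) (l : ℝ) : Prop :=
  (∀ ε : ℝ, 0 < ε → IntegrableOn (fun y => u x - u (x + y)) {y : Eucl n | ε ≤ ‖y‖} ν) ∧
  Tendsto (truncL ν u x) (𝓝[>] (0:ℝ)) (𝓝 l)

/-- Squared norm of the generalized Sobolev space V_ν^D(ℝⁿ). -/
def sobSq {n : ℕ} (ν : Measure (Eucl n)) (D : Set (Eucl n)) (u : Eucl n → ℝ) : ℝ≥0∞ :=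
  (∫⁻ x in D, ENNReal.ofReal (u x ^ 2)) +
    (1/2) * ∫⁻ y in D, ∫⁻ z, ENNReal.ofReal ((u y - u (y + z)) ^ 2) ∂ν

/-- Membership in V_ν^D(ℝⁿ). -/
def MemV {n : ℕ} (ν : Measure (Eucl n)) (D : Set (Eucl n)) (u : Eucl n → ℝ) : Prop :=
  Measurable u ∧ sobSq ν D u < ⊤

/-- Membership in H_ν^D(ℝⁿ): members of V_ν^D vanishing a.e. outside D. -/
def MemH {n : ℕ} (ν : Measure (Eucl n)) (D : Set (Eucl n)) (u : Eucl n → ℝ) : Prop :=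
  MemV ν D u ∧ ∀ᵐ x ∂(volume : Measure (Eucl n)), x ∉ D → u x = 0

/-- The quadratic form ⟨u,u⟩_ν (with values in [0,∞]). -/
def formQ {n : ℕ} (ν : Measure (Eucl n)) (u : Eucl n → ℝ) : ℝ≥0∞ :=
  (1/2) * ∫⁻ y, ∫⁻ z, ENNReal.ofReal ((u y - u (y + z)) ^ 2) ∂ν

/-- The bilinear form ⟨u,v⟩_ν. -/
def formB {n : ℕ} (ν : Measure (Eucl n)) (u v : Eucl n → ℝ) : ℝ :=
  (1/2) * ∫ y, (∫ z, (u y - u (y + z)) * (v y - v (y + z)) ∂ν)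

/-- Weak solution of Lu = f in Ω, u = g on ℝⁿ∖Ω. -/
def IsWeakSol {n : ℕ} (ν : Measure (Eucl n)) (Ω : Set (Eucl n))
    (f g u : Eucl n → ℝ) : Prop :=
  MemV ν Ω u ∧ (∀ᵐ x ∂(volume : Measure (Eucl n)), x ∉ Ω → u x = g x) ∧
  ∀ φ : Eucl n → ℝ, MemH ν Ω φ → formB ν u φ = ∫ x in Ω, f x * φ x

end

theorem dirichlet_stmt17 {n : ℕ} (ν : Measure (Eucl n)) (hν : IsSymmLevy ν)
    (hν0 : 0 < ν ({0}ᶜ : Set (Eucl n)))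
    (Ω : Set (Eucl n)) (hΩo : IsOpen Ω) (hΩne : Ω.Nonempty)
    (hΩb : Bornology.IsBounded Ω)
    (u : Eucl n → ℝ) (hc : Continuous u)
    (hout : ∀ y ∉ Ω, 0 ≤ u y)
    (x : Eucl n) (hx : x ∈ Ω) (hneg : u x < 0)
    (hmin : ∀ y, u x ≤ u y)
    (Lu : Eucl n → ℝ) (hL : ∀ y ∈ Ω, HasLAt ν u y (Lu y)) :
    ∃ x' ∈ Ω, u x' = u x ∧ Lu x' < 0 := by
  classical
  -- The set of global minimizers lies in Ω, is compact.
  have hMsub : u ⁻¹' {u x} ⊆ Ω := by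
    intro y hy
    by_contra hyΩ
    have h1 : u y = u x := hy
    have h2 : 0 ≤ u y := hout y hyΩ
    linarith
  have hMcl : IsClosed (u ⁻¹' {u x}) := isClosed_singleton.preimage hc
  have hMcpt : IsCompact (u ⁻¹' {u x}) :=
    Metric.isCompact_of_isClosed_isBounded hMcl (hΩb.subset hMsub)
  obtain ⟨x₀, hx₀M, hmax⟩ := hMcpt.exists_isMaxOn ⟨x, rfl⟩ continuous_norm.continuousOn
  have hux₀ : u x₀ = u x := hx₀M
  have hx₀Ω : x₀ ∈ Ω := hMsub hx₀M
  have hmin₀ : ∀ y, u x₀ ≤ u y := by intro y; rw [hux₀]; exact hmin y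
  -- a shell of positive measure
  obtain ⟨δ, hδpos, hδν⟩ : ∃ δ : ℝ, 0 < δ ∧ 0 < ν {y : Eucl n | δ ≤ ‖y‖} := by
    by_contra h
    push_neg at h
    have hz : ∀ k : ℕ, ν {y : Eucl n | 1/(k+1 : ℝ) ≤ ‖y‖} = 0 := fun k =>
      le_antisymm (h _ (by positivity)) zero_le
    have hsub : ({0}ᶜ : Set (Eucl n)) ⊆ ⋃ k : ℕ, {y : Eucl n | 1/(k+1:ℝ) ≤ ‖y‖} := by
      intro y hy
      have hny : 0 < ‖y‖ := norm_pos_iff.mpr hy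
      obtain ⟨k, hk⟩ := exists_nat_gt (1 / ‖y‖)
      refine mem_iUnion.mpr ⟨k, ?_⟩
      show 1 / (k+1 : ℝ) ≤ ‖y‖
      rw [div_le_iff₀ (by positivity)]
      rw [div_lt_iff₀ hny] at hk
      nlinarith
    have h0 : ν ({0}ᶜ : Set (Eucl n)) = 0 :=
      measure_mono_null hsub (measure_iUnion_null hz)
    exact absurd h0 hν0.ne'
  refine ⟨x₀, hx₀Ω, hux₀, ?_⟩
  rcases lt_or_ge (Lu x₀) 0 with hlt | hge
  · exact hlt
  exfalso
  obtain ⟨hint, htend⟩ := hL x₀ hx₀Ω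
  -- truncL is nonpositive, so Lu x₀ ≤ 0, hence = 0.
  have htnonpos : ∀ ε : ℝ, truncL ν u x₀ ε ≤ 0 := by
    intro ε
    exact integral_nonpos fun y => sub_nonpos.mpr (hmin₀ _)
  have hLu0 : Lu x₀ = 0 :=
    le_antisymm (le_of_tendsto htend (Filter.Eventually.of_forall fun ε => htnonpos ε)) hge
  set G : ℝ → ℝ := fun ε => ∫ y in {y : Eucl n | ε ≤ ‖y‖}, (u (x₀ + y) - u x₀) ∂ν with hG
  have hgint : ∀ ε : ℝ, 0 < ε →
      IntegrableOn (fun y => u (x₀ + y) - u x₀) {y : Eucl n | ε ≤ ‖y‖} ν := by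
    intro ε hε
    have h2 : (fun y => u (x₀ + y) - u x₀) = fun y : Eucl n => -(u x₀ - u (x₀ + y)) := by
      funext y; ring
    rw [h2]
    exact (hint ε hε).neg
  have htG : ∀ ε : ℝ, truncL ν u x₀ ε = -(G ε) := by
    intro ε
    rw [hG]
    simp only [truncL, ← integral_neg, neg_sub]
  have hGtend : Tendsto G (𝓝[>] (0:ℝ)) (𝓝 0) := by
    have h1 : Tendsto (fun ε => -(G ε)) (𝓝[>] (0:ℝ)) (𝓝 (Lu x₀)) := htend.congr htG
    have h2 := h1.neg
    rw [hLu0] at h2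
    simpa using h2
  have hGnonneg : ∀ ε : ℝ, 0 ≤ G ε := fun ε =>
    integral_nonneg fun y => sub_nonneg.mpr (hmin₀ _)
  have hGδ : G δ = 0 := by
    refine le_antisymm ?_ (hGnonneg δ)
    refine ge_of_tendsto hGtend ?_
    filter_upwards [Ioo_mem_nhdsGT_of_mem (Set.mem_Ico.mpr ⟨le_refl (0:ℝ), hδpos⟩)] with ε hε
    refine setIntegral_mono_set (hgint ε hε.1) ?_ ?_
    · exact Filter.Eventually.of_forall fun y => sub_nonneg.mpr (hmin₀ _)
    · refine HasSubset.Subset.eventuallyLE ?_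
      intro y hy
      exact le_trans hε.2.le hy
  -- the integrand vanishes a.e. on the shell
  have hSmeas : MeasurableSet {y : Eucl n | δ ≤ ‖y‖} :=
    (isClosed_le continuous_const continuous_norm).measurableSet
  have hae : (fun y => u (x₀ + y) - u x₀) =ᵐ[ν.restrict {y : Eucl n | δ ≤ ‖y‖}] 0 :=
    (integral_eq_zero_iff_of_nonneg (fun y => sub_nonneg.mpr (hmin₀ _))
      (hgint δ hδpos)).mp hGδ
  have hae' : ∀ᵐ y ∂ν, y ∈ {y : Eucl n | δ ≤ ‖y‖} → u (x₀ + y) - u x₀ = 0 :=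
    (ae_restrict_iff' hSmeas).mp hae
  set N : Set (Eucl n) := {y : Eucl n | δ ≤ ‖y‖} ∩ {y | u (x₀ + y) ≠ u x₀} with hNdef
  have hNnull : ν N = 0 := by
    refine measure_mono_null ?_ (ae_iff.mp hae')
    intro y hy
    simp only [mem_setOf_eq, Classical.not_imp]
    exact ⟨hy.1, sub_ne_zero.mpr hy.2⟩
  have hNmeas : MeasurableSet N := by
    refine hSmeas.inter ?_
    have : IsClosed {y : Eucl n | u (x₀ + y) = u x₀} :=
      isClosed_eq (hc.comp (continuous_const.add continuous_id)) continuous_const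
    exact this.measurableSet.compl
  have hnegN : ν (-N) = 0 := by
    rw [hν.2.1 N hNmeas]; exact hNnull
  obtain ⟨y, hyS, hyN⟩ : ∃ y, y ∈ {y : Eucl n | δ ≤ ‖y‖} ∧ y ∉ N ∪ -N := by
    by_contra hall
    push_neg at hall
    have hsub : {y : Eucl n | δ ≤ ‖y‖} ⊆ N ∪ -N := fun y hy => hall y hy
    have h0 : ν {y : Eucl n | δ ≤ ‖y‖} = 0 :=
      measure_mono_null hsub (measure_union_null hNnull hnegN)
    exact absurd h0 hδν.ne'
  have hyδ : δ ≤ ‖y‖ := hyS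
  have hy1 : u (x₀ + y) = u x₀ := by
    by_contra hne
    exact hyN (Or.inl ⟨hyS, hne⟩)
  have hy2 : u (x₀ - y) = u x₀ := by
    by_contra hne
    refine hyN (Or.inr ?_)
    rw [Set.mem_neg]
    refine ⟨?_, ?_⟩
    · show δ ≤ ‖-y‖
      rwa [norm_neg]
    · show u (x₀ + -y) ≠ u x₀
      rwa [← sub_eq_add_neg]
  have hm1 : ‖x₀ + y‖ ≤ ‖x₀‖ := hmax (show x₀ + y ∈ u ⁻¹' {u x} from by
    simp only [mem_preimage, mem_singleton_iff]; rw [hy1, hux₀])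
  have hm2 : ‖x₀ - y‖ ≤ ‖x₀‖ := hmax (show x₀ - y ∈ u ⁻¹' {u x} from by
    simp only [mem_preimage, mem_singleton_iff]; rw [hy2, hux₀])
  have hpar := parallelogram_law_with_norm ℝ x₀ y
  have hy0 : 0 < ‖y‖ := lt_of_lt_of_le hδpos hyδ
  nlinarith [norm_nonneg (x₀ + y), norm_nonneg (x₀ - y), norm_nonneg x₀]
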